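/- Let ρ be an n×n density matrix with eigenvalue vector λ↓(ρ) (sorted nonincreasingly). The set of diagonal vectors {diag(UρU†) : U unitary} equals the set {u ∈ ℝⁿ : u ≺ λ↓(ρ)} of all vectors majorized by λ↓(ρ). -/

import Mathlib

open Matrix ComplexOrder

/-- Sum of the `k` largest entries of `x`. -/
noncomputable def kLargestSum {n : ℕ} (x : Fin n → ℝ) (k : ℕ) : ℝ :=
  sSup ((fun s : Finset (Fin n) => ∑ i ∈ s, x i) '' {s | s.card = k})

/-- `x` is majorized by `y` in `ℝⁿ`. -/
def Maj {n : ℕ} (x y : Fin n → ℝ) : Prop :=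
  (∀ k, k < n → kLargestSum x k ≤ kLargestSum y k) ∧ (∑ i, x i = ∑ i, y i)

/-- `x` rearranged in nondecreasing order. -/
noncomputable def sortAsc {n : ℕ} (x : Fin n → ℝ) : Fin n → ℝ := x ∘ (Tuple.sort x)

/-- `x` rearranged in nonincreasing order. -/
noncomputable def sortDesc {n : ℕ} (x : Fin n → ℝ) : Fin n → ℝ := fun i => sortAsc x i.rev

namespace SchurHornAux

def Psum {n : ℕ} (x : Fin n → ℝ) (k : ℕ) : ℝ := ∑ i : Fin n, if (i : ℕ) < k then x i else 0

lemma Psum_zero {n : ℕ} (x : Fin n → ℝ) : Psum x 0 = 0 := by simp [Psum]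

lemma Psum_succ {n : ℕ} (x : Fin n → ℝ) (k : ℕ) :
    Psum x (k + 1) = Psum x k + if h : k < n then x ⟨k, h⟩ else 0 := by
  have h : ∀ i : Fin n, (if (i : ℕ) < k + 1 then x i else 0) =
      (if (i : ℕ) < k then x i else 0) + (if (i : ℕ) = k then x i else 0) := by
    intro i
    rcases lt_trichotomy (i : ℕ) k with h | h | h
    · simp [h, Nat.lt_succ_of_lt h, h.ne]
    · simp [h]
    · simp [Nat.lt_succ_iff, not_le.2 h, (not_lt.2 h.le : ¬ (i:ℕ) < k), h.ne']
  rw [Psum, Finset.sum_congr rfl (fun i _ => h i), Finset.sum_add_distrib]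
  congr 1
  by_cases hk : k < n
  · rw [dif_pos hk]
    rw [Finset.sum_eq_single (⟨k, hk⟩ : Fin n)]
    · simp
    · intro b _ hb
      rw [if_neg]
      simpa [Fin.ext_iff] using hb
    · simp
  · rw [dif_neg hk]
    apply Finset.sum_eq_zero
    intro i _
    rw [if_neg]
    intro h
    exact hk (h ▸ i.2)

lemma Psum_of_le {n : ℕ} (x : Fin n → ℝ) {k : ℕ} (h : n ≤ k) : Psum x k = ∑ i, x i :=
  Finset.sum_congr rfl fun i _ => if_pos (lt_of_lt_of_le i.2 h)

lemma Psum_eq_sum_fin {n : ℕ} (x : Fin n → ℝ) {k : ℕ} (hk : k ≤ n) :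
    Psum x k = ∑ j : Fin k, x (Fin.castLE hk j) := by
  induction k with
  | zero => simp [Psum_zero]
  | succ k ih =>
    rw [Psum_succ, ih (le_of_lt hk), dif_pos (Nat.lt_of_succ_le hk), Fin.sum_univ_castSucc]
    rfl

lemma kLargestSum_eq_sup' {n : ℕ} (x : Fin n → ℝ) {k : ℕ} (hk : k ≤ n) :
    kLargestSum x k = (Finset.powersetCard k (Finset.univ : Finset (Fin n))).sup'
      (Finset.powersetCard_nonempty.2 (by simpa using hk)) (fun s => ∑ i ∈ s, x i) := by
  rw [Finset.sup'_eq_csSup_image, kLargestSum]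
  congr 1
  congr 1
  ext s
  simp [Finset.mem_powersetCard_univ]

lemma sum_le_kLargestSum {n : ℕ} (x : Fin n → ℝ) {k : ℕ} {s : Finset (Fin n)}
    (hs : s.card = k) : ∑ i ∈ s, x i ≤ kLargestSum x k := by
  have hk : k ≤ n := by
    rw [← hs]
    simpa using Finset.card_le_univ s
  rw [kLargestSum_eq_sup' x hk]
  exact Finset.le_sup' (fun s => ∑ i ∈ s, x i) (Finset.mem_powersetCard_univ.2 hs)

lemma kLargestSum_le {n : ℕ} (x : Fin n → ℝ) {k : ℕ} (hk : k ≤ n) {c : ℝ}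
    (H : ∀ s : Finset (Fin n), s.card = k → ∑ i ∈ s, x i ≤ c) : kLargestSum x k ≤ c := by
  rw [kLargestSum_eq_sup' x hk]
  exact Finset.sup'_le _ _ fun s hs => H s (Finset.mem_powersetCard_univ.1 hs)

lemma exists_max_set {n : ℕ} (x : Fin n → ℝ) {k : ℕ} (hk : k ≤ n) :
    ∃ s : Finset (Fin n), s.card = k ∧ kLargestSum x k = ∑ i ∈ s, x i := by
  obtain ⟨s, hs, h⟩ := Finset.exists_mem_eq_sup'
    (Finset.powersetCard_nonempty.2 (by simpa using hk) :
      (Finset.powersetCard k (Finset.univ : Finset (Fin n))).Nonempty)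
    (fun s => ∑ i ∈ s, x i)
  exact ⟨s, Finset.mem_powersetCard_univ.1 hs, by
    rw [kLargestSum_eq_sup' x hk, h]⟩

lemma filter_lt_eq_map {n : ℕ} {k : ℕ} (hk : k ≤ n) :
    Finset.filter (fun i : Fin n => (i : ℕ) < k) Finset.univ
      = Finset.map (Fin.castLEEmb hk) Finset.univ := by
  ext i
  simp only [Finset.mem_filter, Finset.mem_univ, true_and, Finset.mem_map, Fin.castLEEmb_apply]
  constructor
  · intro h
    refine ⟨⟨(i : ℕ), h⟩, ?_⟩
    ext
    simp
  · rintro ⟨j, -, rfl⟩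
    exact j.2


lemma card_filter_lt {n : ℕ} {k : ℕ} (hk : k ≤ n) :
    (Finset.filter (fun i : Fin n => (i : ℕ) < k) Finset.univ).card = k := by
  rw [filter_lt_eq_map hk, Finset.card_map, Finset.card_univ, Fintype.card_fin]

lemma Psum_le_kLargestSum {n : ℕ} (x : Fin n → ℝ) {k : ℕ} (hk : k ≤ n) :
    Psum x k ≤ kLargestSum x k := by
  rw [Psum, ← Finset.sum_filter]
  exact sum_le_kLargestSum x (card_filter_lt hk)

lemma strictMono_le_val {k n : ℕ} {f : Fin k → Fin n} (hf : StrictMono f) (j : Fin k) :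
    (j : ℕ) ≤ (f j : ℕ) := by
  have H : ∀ m : ℕ, ∀ j : Fin k, (j : ℕ) = m → (j : ℕ) ≤ (f j : ℕ) := by
    intro m
    induction m with
    | zero => intro j h; omega
    | succ m ih =>
      intro j h
      have hm : m < k := by omega
      have h1 := ih ⟨m, hm⟩ rfl
      have h2 : f ⟨m, hm⟩ < f j := hf (by simp [Fin.lt_def, h])
      rw [Fin.lt_def] at h2
      simp only at h1
      omega
  exact H _ j rfl

lemma Antitone.kLargestSum_eq {n : ℕ} {x : Fin n → ℝ} (hx : Antitone x) {k : ℕ}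
    (hk : k ≤ n) : kLargestSum x k = Psum x k := by
  refine le_antisymm (kLargestSum_le x hk fun s hs => ?_) (Psum_le_kLargestSum x hk)
  rw [Psum_eq_sum_fin x hk]
  have hsum : ∑ i ∈ s, x i = ∑ j : Fin k, x (s.orderEmbOfFin hs j) := by
    refine (Finset.sum_bij (fun (j : Fin k) _ => s.orderEmbOfFin hs j) ?_ ?_ ?_ ?_).symm
    · intro j _; exact Finset.orderEmbOfFin_mem s hs j
    · intro a _ b _ h; exact (s.orderEmbOfFin hs).injective h
    · intro i hi
      have : i ∈ Set.range (s.orderEmbOfFin hs) := by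
        rw [Finset.range_orderEmbOfFin s hs]
        exact hi
      obtain ⟨j, hj⟩ := this
      exact ⟨j, Finset.mem_univ j, hj⟩
    · intro j _; rfl
  rw [hsum]
  apply Finset.sum_le_sum
  intro j _
  apply hx
  have := strictMono_le_val (s.orderEmbOfFin hs).strictMono j
  exact this

lemma kLargestSum_comp_perm_le {n : ℕ} (x : Fin n → ℝ) (σ : Equiv.Perm (Fin n)) {k : ℕ}
    (hk : k ≤ n) : kLargestSum (x ∘ σ) k ≤ kLargestSum x k := by
  apply kLargestSum_le _ hk
  intro s hs
  rw [show ∑ i ∈ s, (x ∘ σ) i = ∑ i ∈ s.image σ, x i from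
    (Finset.sum_image (fun a _ b _ h => σ.injective h)).symm]
  exact sum_le_kLargestSum x (by rw [Finset.card_image_of_injective _ σ.injective, hs])

lemma kLargestSum_comp_perm {n : ℕ} (x : Fin n → ℝ) (σ : Equiv.Perm (Fin n)) {k : ℕ}
    (hk : k ≤ n) : kLargestSum (x ∘ σ) k = kLargestSum x k := by
  refine le_antisymm (kLargestSum_comp_perm_le x σ hk) ?_
  have := kLargestSum_comp_perm_le (x ∘ σ) σ⁻¹ hk
  have he : (x ∘ σ) ∘ ⇑σ⁻¹ = x := by
    funext i; simp
  rwa [he] at this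

lemma Maj_comp_perm {n : ℕ} {x y : Fin n → ℝ} (σ τ : Equiv.Perm (Fin n)) (h : Maj x y) :
    Maj (x ∘ σ) (y ∘ τ) := by
  constructor
  · intro k hk
    rw [kLargestSum_comp_perm x σ hk.le, kLargestSum_comp_perm y τ hk.le]
    exact h.1 k hk
  · rw [show ∑ i, (x ∘ σ) i = ∑ i, x i from Equiv.sum_comp σ x,
      show ∑ i, (y ∘ τ) i = ∑ i, y i from Equiv.sum_comp τ y]
    exact h.2

lemma kLargestSum_zero {n : ℕ} (x : Fin n → ℝ) : kLargestSum x 0 = 0 := by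
  refine le_antisymm (kLargestSum_le x (Nat.zero_le n) fun s hs => ?_) ?_
  · rw [Finset.card_eq_zero.1 hs]
    simp
  · simpa using sum_le_kLargestSum x (Finset.card_empty (α := Fin n))

lemma weighted_le_kLargestSum {n : ℕ} (y c : Fin n → ℝ) {k : ℕ} (hk : k ≤ n)
    (hc0 : ∀ j, 0 ≤ c j) (hc1 : ∀ j, c j ≤ 1) (hsum : ∑ j, c j = k) :
    ∑ j, c j * y j ≤ kLargestSum y k := by
  rcases Nat.eq_zero_or_pos k with rfl | hkpos
  · rw [kLargestSum_zero]
    have : ∀ j ∈ Finset.univ, c j = 0 := by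
      intro j _
      have := (Finset.sum_eq_zero_iff_of_nonneg (fun i _ => hc0 i)).1 (by simpa using hsum)
      exact this j (Finset.mem_univ j)
    rw [Finset.sum_congr rfl (fun j hj => by rw [this j hj, zero_mul])]
    simp
  · obtain ⟨t, htc, hteq⟩ := exists_max_set y hk
    have htne : t.Nonempty := Finset.card_pos.1 (htc ▸ hkpos)
    obtain ⟨j0, hj0t, hj0min⟩ := Finset.exists_min_image t y htne
    set θ := y j0 with hθ
    -- swap property
    have hswap : ∀ j ∈ t, ∀ j' ∉ t, y j' ≤ y j := by
      intro j hj j' hj'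
      by_contra hlt
      push_neg at hlt
      have hcard : (insert j' (t.erase j)).card = k := by
        rw [Finset.card_insert_of_notMem (fun h => hj' (Finset.mem_of_mem_erase h)),
          Finset.card_erase_of_mem hj, htc]
        omega
      have hsum' : ∑ i ∈ insert j' (t.erase j), y i = ∑ i ∈ t, y i - y j + y j' := by
        rw [Finset.sum_insert (fun h => hj' (Finset.mem_of_mem_erase h))]
        have := Finset.add_sum_erase t y hj
        linarith
      have := sum_le_kLargestSum y hcard
      rw [hsum'] at this
      linarith [hteq]
    -- outside bound
    have hout : ∀ j ∉ t, y j ≤ θ := fun j hj => hswap j0 hj0t j hj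
    have hin : ∀ j ∈ t, θ ≤ y j := fun j hj => hj0min j hj
    rw [hteq]
    have hsplit : ∀ (f : Fin n → ℝ), ∑ j, f j = ∑ j ∈ t, f j + ∑ j ∈ tᶜ, f j :=
      fun f => (Finset.sum_add_sum_compl t f).symm
    rw [hsplit (fun j => c j * y j)]
    have h1 : ∑ j ∈ t, c j * y j ≤ ∑ j ∈ t, (y j + (c j - 1) * θ) := by
      apply Finset.sum_le_sum
      intro j hj
      have h := mul_le_mul_of_nonpos_left (hin j hj) (by linarith [hc1 j] : c j - 1 ≤ 0)
      nlinarith [hin j hj, hc1 j]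
    have h2 : ∑ j ∈ tᶜ, c j * y j ≤ ∑ j ∈ tᶜ, c j * θ := by
      apply Finset.sum_le_sum
      intro j hj
      exact mul_le_mul_of_nonneg_left (hout j (by simpa using hj)) (hc0 j)
    have e1 : ∑ j ∈ t, (y j + (c j - 1) * θ) + ∑ j ∈ tᶜ, c j * θ = ∑ j ∈ t, y j := by
      rw [Finset.sum_add_distrib]
      have ht1 : ∑ j ∈ t, (c j - 1) * θ = ∑ j ∈ t, c j * θ - k * θ := by
        rw [Finset.sum_congr rfl (fun j _ => by ring : ∀ j ∈ t, (c j - 1) * θ = c j * θ - θ),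
          Finset.sum_sub_distrib, Finset.sum_const, htc, nsmul_eq_mul]
      have ht2 : ∑ j ∈ t, c j * θ + ∑ j ∈ tᶜ, c j * θ = k * θ := by
        have h3 := hsplit (fun j => c j * θ)
        have h4 : ∑ j, c j * θ = (k : ℝ) * θ := by
          rw [← Finset.sum_mul, hsum]
        linarith
      linarith
    linarith

lemma sortDesc_eq_comp {n : ℕ} (x : Fin n → ℝ) :
    sortDesc x = x ∘ ⇑((Fin.revPerm).trans (Tuple.sort x)) := by
  funext i
  rfl

lemma antitone_sortDesc {n : ℕ} (x : Fin n → ℝ) : Antitone (sortDesc x) := by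
  intro i j hij
  exact Tuple.monotone_sort x (by simpa using Fin.rev_le_rev.2 hij)

def PMaj {n : ℕ} (x y : Fin n → ℝ) : Prop :=
  (∀ k, Psum x k ≤ Psum y k) ∧ (∑ i, x i = ∑ i, y i)

lemma maj_to_pmaj {n : ℕ} {x y : Fin n → ℝ} (hy : Antitone y) (h : Maj x y) : PMaj x y := by
  refine ⟨fun k => ?_, h.2⟩
  rcases le_or_gt n k with hk | hk
  · rw [Psum_of_le x hk, Psum_of_le y hk]
    exact le_of_eq h.2
  · calc Psum x k ≤ kLargestSum x k := Psum_le_kLargestSum x hk.le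
      _ ≤ kLargestSum y k := h.1 k hk
      _ = Psum y k := Antitone.kLargestSum_eq hy hk.le

lemma diag_conj_eq_weighted {n : ℕ} (W : Matrix (Fin n) (Fin n) ℂ) (y : Fin n → ℝ) (i : Fin n) :
    (W * Matrix.diagonal (fun j => (y j : ℂ)) * Wᴴ) i i
      = ((∑ j, Complex.normSq (W i j) * y j : ℝ) : ℂ) := by
  rw [Matrix.mul_apply]
  push_cast
  apply Finset.sum_congr rfl
  intro k _
  rw [Matrix.mul_diagonal, Matrix.conjTranspose_apply]
  rw [show W i k * (y k : ℂ) * star (W i k) = W i k * star (W i k) * (y k : ℂ) by ring]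
  rw [show star (W i k) = (starRingEnd ℂ) (W i k) from rfl, Complex.mul_conj]

lemma col_sum_normSq {n : ℕ} {W : Matrix (Fin n) (Fin n) ℂ}
    (hW : W ∈ Matrix.unitaryGroup (Fin n) ℂ) (j : Fin n) :
    ∑ i, Complex.normSq (W i j) = 1 := by
  have h := Matrix.mem_unitaryGroup_iff'.1 hW
  have h2 := congrArg (fun M => M j j) h
  simp only [Matrix.mul_apply, Matrix.one_apply_eq] at h2
  have h3 : ∑ i, ((Complex.normSq (W i j) : ℂ)) = 1 := by
    rw [← h2]
    apply Finset.sum_congr rfl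
    intro i _
    rw [Matrix.star_apply, show star (W i j) = (starRingEnd ℂ) (W i j) from rfl,
      mul_comm, Complex.mul_conj]
  have := congrArg Complex.re h3
  simpa using this

lemma row_sum_normSq {n : ℕ} {W : Matrix (Fin n) (Fin n) ℂ}
    (hW : W ∈ Matrix.unitaryGroup (Fin n) ℂ) (i : Fin n) :
    ∑ j, Complex.normSq (W i j) = 1 := by
  have h := Matrix.mem_unitaryGroup_iff.1 hW
  have h2 := congrArg (fun M => M i i) h
  simp only [Matrix.mul_apply, Matrix.one_apply_eq] at h2
  have h3 : ∑ j, ((Complex.normSq (W i j) : ℂ)) = 1 := by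
    rw [← h2]
    apply Finset.sum_congr rfl
    intro j _
    rw [Matrix.star_apply, show star (W i j) = (starRingEnd ℂ) (W i j) from rfl,
      Complex.mul_conj]
  have := congrArg Complex.re h3
  simpa using this

lemma maj_of_unitary {n : ℕ} {W : Matrix (Fin n) (Fin n) ℂ}
    (hW : W ∈ Matrix.unitaryGroup (Fin n) ℂ) (y : Fin n → ℝ) :
    Maj (fun i => ∑ j, Complex.normSq (W i j) * y j) y := by
  have key : ∀ s : Finset (Fin n),
      ∑ i ∈ s, ∑ j, Complex.normSq (W i j) * y j
        = ∑ j, (∑ i ∈ s, Complex.normSq (W i j)) * y j := by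
    intro s
    rw [Finset.sum_comm]
    exact Finset.sum_congr rfl fun j _ => (Finset.sum_mul _ _ _).symm
  constructor
  · intro k hk
    apply kLargestSum_le _ hk.le
    intro s hs
    rw [key s]
    apply weighted_le_kLargestSum y _ hk.le
    · intro j
      exact Finset.sum_nonneg fun i _ => Complex.normSq_nonneg _
    · intro j
      calc ∑ i ∈ s, Complex.normSq (W i j) ≤ ∑ i, Complex.normSq (W i j) :=
            Finset.sum_le_sum_of_subset_of_nonneg (Finset.subset_univ s)
              (fun i _ _ => Complex.normSq_nonneg _)
        _ = 1 := col_sum_normSq hW j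
    · rw [Finset.sum_comm]
      rw [Finset.sum_congr rfl fun i (_ : i ∈ s) => row_sum_normSq hW i]
      simp [hs]
  · rw [key Finset.univ]
    apply Finset.sum_congr rfl
    intro j _
    rw [col_sum_normSq hW j, one_mul]
lemma exists_rot {yp yq a : ℝ} (hq : yq ≤ a) (hp : a ≤ yp) :
    ∃ c s : ℝ, c ^ 2 + s ^ 2 = 1 ∧ c ^ 2 * yp + s ^ 2 * yq = a := by
  by_cases h : yp = yq
  · exact ⟨1, 0, by norm_num, by subst h; nlinarith⟩
  · have hlt : yq < yp := lt_of_le_of_ne (hq.trans hp) (Ne.symm h)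
    set t := (a - yq) / (yp - yq) with ht
    have h0 : 0 ≤ t := div_nonneg (by linarith) (by linarith)
    have h1 : t ≤ 1 := by
      rw [ht, div_le_one (by linarith)]
      linarith
    refine ⟨Real.sqrt t, Real.sqrt (1 - t), ?_, ?_⟩
    · rw [Real.sq_sqrt h0, Real.sq_sqrt (by linarith)]
      ring
    · rw [Real.sq_sqrt h0, Real.sq_sqrt (by linarith)]
      have : t * (yp - yq) = a - yq := div_mul_cancel₀ _ (by intro hh; nlinarith)
      nlinarith

lemma Psum_comp_succ {n : ℕ} (x : Fin (n + 1) → ℝ) (k : ℕ) :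
    Psum x (k + 1) = x 0 + Psum (x ∘ Fin.succ) k := by
  rw [Psum, Fin.sum_univ_succ]
  congr 1
  · apply Finset.sum_congr rfl
    intro i _
    simp only [Fin.val_succ, Function.comp_apply, Nat.add_lt_add_iff_right]

def yprime {n : ℕ} (y : Fin (n + 1) → ℝ) (j : Fin n) (a : ℝ) : Fin n → ℝ :=
  fun i => if i = j then y j.castSucc + y j.succ - a else y (j.castSucc.succAbove i)

lemma yprime_psum {n : ℕ} (y : Fin (n + 1) → ℝ) (j : Fin n) (a : ℝ) (k : ℕ) :
    Psum (yprime y j a) k = if k ≤ (j : ℕ) then Psum y k else Psum y (k + 1) - a := by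
  induction k with
  | zero => rw [Psum_zero, if_pos (Nat.zero_le _), Psum_zero]
  | succ k ih =>
    rcases lt_trichotomy k (j : ℕ) with hk | hk | hk
    · -- k + 1 ≤ j
      have hkn : k < n := lt_of_lt_of_le hk (le_of_lt j.2)
      have hkn1 : k < n + 1 := by omega
      rw [Psum_succ, ih, if_pos hk.le, if_pos (by omega), Psum_succ, dif_pos hkn, dif_pos hkn1]
      have hv : yprime y j a ⟨k, hkn⟩ = y ⟨k, hkn1⟩ := by
        rw [yprime]
        rw [if_neg (by intro hh; rw [Fin.ext_iff] at hh; simp at hh; omega)]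
        rw [Fin.succAbove_of_castSucc_lt _ _ (by rw [Fin.lt_def]; simpa using hk)]
        congr 1
      rw [hv]
    · -- k = j
      have hkn : k < n := hk ▸ j.2
      have hj1 : k + 1 < n + 1 := by omega
      have hkn1 : k < n + 1 := by omega
      rw [Psum_succ, ih, if_pos hk.le, if_neg (by omega), Psum_succ, Psum_succ,
        dif_pos hkn, dif_pos hj1, dif_pos hkn1]
      have hv : yprime y j a ⟨k, hkn⟩ = y j.castSucc + y j.succ - a := by
        rw [yprime, if_pos (by ext; simp [hk])]
      have hp : y ⟨k, hkn1⟩ = y j.castSucc := by congr 1; ext; simp [hk]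
      have hq : y ⟨k + 1, hj1⟩ = y j.succ := by congr 1; ext; simp [hk]
      rw [hv, hp, hq]
      ring
    · -- k > j
      have h2 : ¬ (k + 1 ≤ (j : ℕ)) := by omega
      rw [Psum_succ, ih, if_neg (by omega), if_neg h2, Psum_succ y (k + 1)]
      by_cases hkn : k < n
      · rw [dif_pos hkn, dif_pos (by omega : k + 1 < n + 1)]
        have hv : yprime y j a ⟨k, hkn⟩ = y ⟨k + 1, by omega⟩ := by
          rw [yprime, if_neg (by intro hh; rw [Fin.ext_iff] at hh; simp at hh; omega)]
          rw [Fin.succAbove_of_le_castSucc _ _ (by rw [Fin.le_def]; simpa using hk.le)]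
          congr 1
        rw [hv]
        ring
      · rw [dif_neg hkn, dif_neg (by omega : ¬ (k + 1 < n + 1))]
        ring

lemma antitone_comp_succ {n : ℕ} {x : Fin (n + 1) → ℝ} (hx : Antitone x) :
    Antitone (x ∘ Fin.succ) := fun i k h => hx (by simpa using h)

lemma antitone_yprime {n : ℕ} {y : Fin (n + 1) → ℝ} (hy : Antitone y) {j : Fin n} {a : ℝ}
    (hq : y j.succ ≤ a) (hp : a ≤ y j.castSucc) : Antitone (yprime y j a) := by
  cases n with
  | zero => exact fun i _ _ => i.elim0
  | succ m =>
    rw [Fin.antitone_iff_succ_le]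
    intro i
    have hb1 : y j.castSucc + y j.succ - a ≤ y j.castSucc := by linarith
    have hb2 : y j.succ ≤ y j.castSucc + y j.succ - a := by linarith
    rcases eq_or_ne i.castSucc j with hcj | hcj
    · -- i.castSucc = j, so i.succ ≠ j
      have hsj : i.succ ≠ j := by
        intro hh
        rw [← hcj] at hh
        exact absurd (congrArg Fin.val hh) (by simp)
      simp only [yprime]
      rw [if_neg hsj, if_pos hcj]
      have hval : j.castSucc.succAbove i.succ = (⟨(i : ℕ) + 2, by omega⟩ : Fin (m + 2)) := by
        rw [Fin.succAbove_of_le_castSucc _ _ (by rw [Fin.le_def]; simp [← hcj])]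
        ext; simp
      refine le_trans ?_ hb2
      apply hy
      rw [hval, Fin.le_def]
      simp [← hcj]
    · rcases eq_or_ne i.succ j with hsj | hsj
      · -- i.succ = j
        simp only [yprime]
        rw [if_pos hsj, if_neg hcj]
        have hval : j.castSucc.succAbove i.castSucc = (⟨(i : ℕ), by omega⟩ : Fin (m + 2)) := by
          rw [Fin.succAbove_of_castSucc_lt _ _ (by rw [Fin.lt_def]; simp [← hsj])]
          ext; simp
        refine le_trans hb1 ?_
        apply hy
        rw [hval, Fin.le_def]
        simp [← hsj]
      · simp only [yprime]
        rw [if_neg hsj, if_neg hcj]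
        exact hy ((Fin.strictMono_succAbove j.castSucc).monotone (Fin.castSucc_le_succ i))

lemma pmaj_step {n : ℕ} {x y : Fin (n + 1) → ℝ} (hx : Antitone x) (hy : Antitone y)
    (h : PMaj x y) {j : Fin n} (hq : y j.succ ≤ x 0) (hp : x 0 ≤ y j.castSucc) :
    PMaj (x ∘ Fin.succ) (yprime y j (x 0)) := by
  set a := x 0 with ha
  constructor
  · intro k
    rw [yprime_psum]
    by_cases hk : k ≤ (j : ℕ)
    · rw [if_pos hk]
      have hkn : k ≤ n := by omega
      have hkn1 : k ≤ n + 1 := by omega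
      calc Psum (x ∘ Fin.succ) k = ∑ i : Fin k, (x ∘ Fin.succ) (Fin.castLE hkn i) :=
            Psum_eq_sum_fin _ hkn
        _ ≤ ∑ i : Fin k, x (Fin.castLE hkn1 i) := by
            apply Finset.sum_le_sum
            intro i _
            apply hx
            rw [Fin.le_def]
            simp
        _ = Psum x k := (Psum_eq_sum_fin _ hkn1).symm
        _ ≤ Psum y k := h.1 k
    · rw [if_neg hk]
      have hxk : Psum (x ∘ Fin.succ) k = Psum x (k + 1) - a := by
        rw [Psum_comp_succ]; ring
      rw [hxk]
      linarith [h.1 (k + 1)]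
  · have h1 : ∑ i, (x ∘ Fin.succ) i = ∑ i, x i - a := by
      rw [Fin.sum_univ_succ x]; simp [ha]
    have h2 : ∑ i, yprime y j a i = ∑ i, y i - a := by
      rw [← Psum_of_le (yprime y j a) (le_refl n), yprime_psum,
        if_neg (by omega : ¬ n ≤ (j : ℕ)), Psum_of_le y (le_refl (n + 1))]
    rw [h1, h2, h.2]
lemma sum_pair {N : ℕ} {p q : Fin N} (hpq : p ≠ q) (A B : Fin N → ℂ) :
    ∑ m, (if m = p then A m else if m = q then B m else 0) = A p + B q := by
  have key : ∀ m, (if m = p then A m else if m = q then B m else 0)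
      = (if m = p then A m else 0) + (if m = q then B m else 0) := by
    intro m
    rcases eq_or_ne m p with rfl | hmp
    · rw [if_pos rfl, if_pos rfl, if_neg hpq, add_zero]
    · rw [if_neg hmp, if_neg hmp, zero_add]
  rw [Finset.sum_congr rfl fun m _ => key m, Finset.sum_add_distrib,
    Finset.sum_ite_eq' Finset.univ p A, Finset.sum_ite_eq' Finset.univ q B]
  simp

lemma sum_single {N : ℕ} (i : Fin N) (A : Fin N → ℂ) :
    ∑ m, (if m = i then A m else 0) = A i := by
  rw [Finset.sum_ite_eq' Finset.univ i A]
  simp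

def rotG {n : ℕ} (p q : Fin n) (c s : ℝ) : Matrix (Fin n) (Fin n) ℂ :=
  Matrix.of fun i k =>
    if i = p then (if k = p then (c : ℂ) else if k = q then (s : ℂ) else 0)
    else if i = q then (if k = p then (s : ℂ) else if k = q then (-c : ℂ) else 0)
    else if i = k then 1 else 0

section RotG

variable {n : ℕ} {p q : Fin n} {c s : ℝ}

lemma star_oR (r : ℝ) : star ((r : ℂ)) = (r : ℂ) := Complex.conj_ofReal r

lemma rotG_apply_p (k : Fin n) :
    rotG p q c s p k = (if k = p then (c : ℂ) else if k = q then (s : ℂ) else 0) := by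
  simp [rotG]

lemma rotG_apply_q (hpq : p ≠ q) (k : Fin n) :
    rotG p q c s q k = (if k = p then (s : ℂ) else if k = q then (-c : ℂ) else 0) := by
  rw [rotG]
  dsimp only [Matrix.of_apply]
  rw [if_neg (Ne.symm hpq), if_pos rfl]

lemma rotG_apply_other {i : Fin n} (hip : i ≠ p) (hiq : i ≠ q) (k : Fin n) :
    rotG p q c s i k = (if i = k then 1 else 0) := by
  rw [rotG]
  dsimp only [Matrix.of_apply]
  rw [if_neg hip, if_neg hiq]

lemma rotG_conjTranspose (hpq : p ≠ q) : (rotG p q c s)ᴴ = rotG p q c s := by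
  ext i k
  rw [Matrix.conjTranspose_apply]
  rcases eq_or_ne k p with hk | hkp
  · rw [hk, rotG_apply_p]
    rcases eq_or_ne i p with hi | hip
    · rw [hi, if_pos rfl, rotG_apply_p, if_pos rfl, star_oR]
    · rcases eq_or_ne i q with hi | hiq
      · rw [hi, if_neg (Ne.symm hpq), if_pos rfl, star_oR, rotG_apply_q hpq, if_pos rfl]
      · rw [if_neg hip, if_neg hiq, star_zero, rotG_apply_other hip hiq, if_neg hip]
  · rcases eq_or_ne k q with hk | hkq
    · rw [hk, rotG_apply_q hpq]
      rcases eq_or_ne i p with hi | hip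
      · rw [hi, if_pos rfl, star_oR, rotG_apply_p, if_neg (Ne.symm hpq), if_pos rfl]
      · rcases eq_or_ne i q with hi | hiq
        · rw [hi, if_neg (Ne.symm hpq), if_pos rfl, star_neg, star_oR, rotG_apply_q hpq,
            if_neg (Ne.symm hpq), if_pos rfl]
        · rw [if_neg hip, if_neg hiq, star_zero, rotG_apply_other hip hiq, if_neg hiq]
    · rw [rotG_apply_other hkp hkq]
      rcases eq_or_ne i p with hi | hip
      · rw [hi, if_neg hkp, star_zero, rotG_apply_p, if_neg hkp, if_neg hkq]
      · rcases eq_or_ne i q with hi | hiq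
        · rw [hi, if_neg hkq, star_zero, rotG_apply_q hpq, if_neg hkp, if_neg hkq]
        · rw [rotG_apply_other hip hiq]
          rcases eq_or_ne i k with hi | hik
          · rw [hi, if_pos rfl, star_one]
          · rw [if_neg (Ne.symm hik), if_neg hik, star_zero]

lemma cc_ss (hcs : c ^ 2 + s ^ 2 = 1) : (c : ℂ) * c + (s : ℂ) * s = 1 := by
  have h1 : (c : ℂ) * c + (s : ℂ) * s = ((c ^ 2 + s ^ 2 : ℝ) : ℂ) := by push_cast; ring
  rw [h1, hcs]
  norm_num

lemma ss_cc (hcs : c ^ 2 + s ^ 2 = 1) : (s : ℂ) * s + (-c : ℂ) * (-c) = 1 := by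
  have h1 : (s : ℂ) * s + (-c : ℂ) * (-c) = ((c ^ 2 + s ^ 2 : ℝ) : ℂ) := by push_cast; ring
  rw [h1, hcs]
  norm_num

lemma rotG_row_p (hpq : p ≠ q) (f : Fin n → ℂ) :
    ∑ m, rotG p q c s p m * f m = (c : ℂ) * f p + (s : ℂ) * f q := by
  have key : ∀ m, rotG p q c s p m * f m
      = (if m = p then (c : ℂ) * f m else if m = q then (s : ℂ) * f m else 0) := by
    intro m
    rw [rotG_apply_p]
    rcases eq_or_ne m p with rfl | hmp
    · rw [if_pos rfl, if_pos rfl]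
    · rcases eq_or_ne m q with rfl | hmq
      · rw [if_neg hmp, if_pos rfl, if_neg hmp, if_pos rfl]
      · rw [if_neg hmp, if_neg hmq, if_neg hmp, if_neg hmq, zero_mul]
  rw [Finset.sum_congr rfl fun m _ => key m, sum_pair hpq]

lemma rotG_row_q (hpq : p ≠ q) (f : Fin n → ℂ) :
    ∑ m, rotG p q c s q m * f m = (s : ℂ) * f p + (-c : ℂ) * f q := by
  have key : ∀ m, rotG p q c s q m * f m
      = (if m = p then (s : ℂ) * f m else if m = q then (-c : ℂ) * f m else 0) := by
    intro m
    rw [rotG_apply_q hpq]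
    rcases eq_or_ne m p with rfl | hmp
    · rw [if_pos rfl, if_pos rfl]
    · rcases eq_or_ne m q with rfl | hmq
      · rw [if_neg hmp, if_pos rfl, if_neg hmp, if_pos rfl]
      · rw [if_neg hmp, if_neg hmq, if_neg hmp, if_neg hmq, zero_mul]
  rw [Finset.sum_congr rfl fun m _ => key m, sum_pair hpq]

lemma rotG_row_other {i : Fin n} (hip : i ≠ p) (hiq : i ≠ q) (f : Fin n → ℂ) :
    ∑ m, rotG p q c s i m * f m = f i := by
  have key : ∀ m, rotG p q c s i m * f m = (if m = i then f m else 0) := by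
    intro m
    rw [rotG_apply_other hip hiq]
    rcases eq_or_ne i m with rfl | him
    · rw [if_pos rfl, if_pos rfl, one_mul]
    · rw [if_neg him, if_neg (Ne.symm him), zero_mul]
  rw [Finset.sum_congr rfl fun m _ => key m, sum_single]

lemma rotG_mul_self (hpq : p ≠ q) (hcs : c ^ 2 + s ^ 2 = 1) :
    rotG p q c s * rotG p q c s = 1 := by
  ext i k
  rw [Matrix.mul_apply, Matrix.one_apply]
  rcases eq_or_ne i p with hi | hip
  · rw [hi, rotG_row_p hpq, rotG_apply_p, rotG_apply_q hpq]
    rcases eq_or_ne k p with hk | hkp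
    · rw [hk, if_pos rfl, if_pos rfl, if_pos rfl]
      exact cc_ss hcs
    · rcases eq_or_ne k q with hk | hkq
      · rw [hk, if_neg (Ne.symm hpq), if_neg (Ne.symm hpq), if_pos rfl, if_pos rfl, if_neg hpq]
        ring
      · rw [if_neg hkp, if_neg hkp, if_neg hkq, if_neg hkq, if_neg (fun hh => hkp hh.symm)]
        ring
  · rcases eq_or_ne i q with hi | hiq
    · rw [hi, rotG_row_q hpq, rotG_apply_p, rotG_apply_q hpq]
      rcases eq_or_ne k p with hk | hkp
      · rw [hk, if_pos rfl, if_pos rfl, if_neg (Ne.symm hpq)]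
        ring
      · rcases eq_or_ne k q with hk | hkq
        · rw [hk, if_neg (Ne.symm hpq), if_neg (Ne.symm hpq), if_pos rfl, if_pos rfl, if_pos rfl]
          exact ss_cc hcs
        · rw [if_neg hkp, if_neg hkp, if_neg hkq, if_neg hkq, if_neg (fun hh => hkq hh.symm)]
          ring
    · rw [rotG_row_other hip hiq, rotG_apply_other hip hiq]

lemma rotG_unitary (hpq : p ≠ q) (hcs : c ^ 2 + s ^ 2 = 1) : rotG p q c s ∈ Matrix.unitaryGroup (Fin n) ℂ := by
  rw [Matrix.mem_unitaryGroup_iff, Matrix.star_eq_conjTranspose, rotG_conjTranspose hpq]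
  exact rotG_mul_self hpq hcs

end RotG
section RotM

variable {n : ℕ} {p q : Fin n} {c s : ℝ} (y : Fin n → ℝ)

lemma rotM_row (hpq : p ≠ q) (i k : Fin n) :
    (rotG p q c s * Matrix.diagonal (fun m => (y m : ℂ)) * (rotG p q c s)ᴴ) i k
      = ∑ m, rotG p q c s i m * ((y m : ℂ) * rotG p q c s m k) := by
  rw [rotG_conjTranspose hpq, Matrix.mul_apply]
  apply Finset.sum_congr rfl
  intro m _
  rw [Matrix.mul_diagonal]
  ring

lemma rotM_pp (hpq : p ≠ q) :
    (rotG p q c s * Matrix.diagonal (fun m => (y m : ℂ)) * (rotG p q c s)ᴴ) p p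
      = ((c ^ 2 * y p + s ^ 2 * y q : ℝ) : ℂ) := by
  rw [rotM_row y hpq, rotG_row_p hpq, rotG_apply_p, rotG_apply_q hpq,
    if_pos rfl, if_pos rfl]
  push_cast
  ring

lemma rotM_qq (hpq : p ≠ q) :
    (rotG p q c s * Matrix.diagonal (fun m => (y m : ℂ)) * (rotG p q c s)ᴴ) q q
      = ((s ^ 2 * y p + c ^ 2 * y q : ℝ) : ℂ) := by
  rw [rotM_row y hpq, rotG_row_q hpq, rotG_apply_p, rotG_apply_q hpq,
    if_neg (Ne.symm hpq), if_pos rfl, if_neg (Ne.symm hpq), if_pos rfl]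
  push_cast
  ring

lemma rotM_diag_other (hpq : p ≠ q) {i : Fin n} (hip : i ≠ p) (hiq : i ≠ q) :
    (rotG p q c s * Matrix.diagonal (fun m => (y m : ℂ)) * (rotG p q c s)ᴴ) i i
      = ((y i : ℝ) : ℂ) := by
  rw [rotM_row y hpq, rotG_row_other hip hiq, rotG_apply_other hip hiq, if_pos rfl, mul_one]

lemma rotM_offdiag (hpq : p ≠ q) {i k : Fin n} (hip : i ≠ p) (hkp : k ≠ p) (hik : i ≠ k) :
    (rotG p q c s * Matrix.diagonal (fun m => (y m : ℂ)) * (rotG p q c s)ᴴ) i k = 0 := by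
  rw [rotM_row y hpq]
  rcases eq_or_ne i q with hi | hiq
  · rw [hi, rotG_row_q hpq, rotG_apply_p, rotG_apply_q hpq]
    have hkq : k ≠ q := fun hh => hik (hi.symm ▸ hh.symm ▸ rfl)
    rw [if_neg hkp, if_neg hkq, if_neg hkp, if_neg hkq]
    ring
  · rw [rotG_row_other hip hiq, rotG_apply_other hip hiq, if_neg hik, mul_zero]

end RotM

section ExtM

variable {n : ℕ}

def extM (V : Matrix (Fin n) (Fin n) ℂ) : Matrix (Fin (n + 1)) (Fin (n + 1)) ℂ :=
  Matrix.of fun i k =>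
    Fin.cases (Fin.cases 1 (fun _ => 0) k) (fun i' => Fin.cases 0 (fun k' => V i' k') k) i

@[simp] lemma extM_zero_zero (V : Matrix (Fin n) (Fin n) ℂ) : extM V 0 0 = 1 := by
  simp [extM]

@[simp] lemma extM_zero_succ (V : Matrix (Fin n) (Fin n) ℂ) (k : Fin n) :
    extM V 0 k.succ = 0 := by
  simp [extM]

@[simp] lemma extM_succ_zero (V : Matrix (Fin n) (Fin n) ℂ) (i : Fin n) :
    extM V i.succ 0 = 0 := by
  simp [extM]

@[simp] lemma extM_succ_succ (V : Matrix (Fin n) (Fin n) ℂ) (i k : Fin n) :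
    extM V i.succ k.succ = V i k := by
  simp [extM]

lemma extM_mul (V W : Matrix (Fin n) (Fin n) ℂ) : extM V * extM W = extM (V * W) := by
  ext i k
  rw [Matrix.mul_apply, Fin.sum_univ_succ]
  induction i using Fin.cases with
  | zero =>
    induction k using Fin.cases with
    | zero => simp
    | succ k => simp
  | succ i =>
    induction k using Fin.cases with
    | zero => simp
    | succ k => simp [Matrix.mul_apply]

lemma extM_conjT (V : Matrix (Fin n) (Fin n) ℂ) : (extM V)ᴴ = extM Vᴴ := by
  ext i k
  rw [Matrix.conjTranspose_apply]
  induction i using Fin.cases with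
  | zero =>
    induction k using Fin.cases with
    | zero => simp
    | succ k => simp
  | succ i =>
    induction k using Fin.cases with
    | zero => simp
    | succ k => simp [Matrix.conjTranspose_apply]

lemma extM_one : extM (1 : Matrix (Fin n) (Fin n) ℂ) = 1 := by
  ext i k
  induction i using Fin.cases with
  | zero =>
    induction k using Fin.cases with
    | zero => simp
    | succ k => simp [Matrix.one_apply, (Fin.succ_ne_zero k).symm]
  | succ i =>
    induction k using Fin.cases with
    | zero => simp [Matrix.one_apply, Fin.succ_ne_zero i]
    | succ k => simp [Matrix.one_apply, Fin.succ_inj]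

lemma extM_unitary {V : Matrix (Fin n) (Fin n) ℂ} (hV : V ∈ Matrix.unitaryGroup (Fin n) ℂ) :
    extM V ∈ Matrix.unitaryGroup (Fin (n + 1)) ℂ := by
  rw [Matrix.mem_unitaryGroup_iff, Matrix.star_eq_conjTranspose, extM_conjT, extM_mul]
  have h : V * Vᴴ = 1 := by
    rw [← Matrix.star_eq_conjTranspose]
    exact Matrix.mem_unitaryGroup_iff.1 hV
  rw [h, extM_one]

lemma extM_conj_zero (V : Matrix (Fin n) (Fin n) ℂ) (N : Matrix (Fin (n + 1)) (Fin (n + 1)) ℂ) :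
    (extM V * N * (extM V)ᴴ) 0 0 = N 0 0 := by
  have h1 : ∀ k, (extM V * N) 0 k = N 0 k := by
    intro k
    rw [Matrix.mul_apply, Fin.sum_univ_succ]
    simp
  rw [Matrix.mul_apply, Fin.sum_univ_succ]
  simp [h1, Matrix.conjTranspose_apply]

lemma extM_conj_succ (V : Matrix (Fin n) (Fin n) ℂ) (N : Matrix (Fin (n + 1)) (Fin (n + 1)) ℂ)
    (i : Fin n) :
    (extM V * N * (extM V)ᴴ) i.succ i.succ
      = (V * N.submatrix Fin.succ Fin.succ * Vᴴ) i i := by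
  have h1 : ∀ k, (extM V * N) i.succ k = ∑ m, V i m * N m.succ k := by
    intro k
    rw [Matrix.mul_apply, Fin.sum_univ_succ]
    simp
  rw [Matrix.mul_apply, Fin.sum_univ_succ, Matrix.mul_apply]
  simp only [Matrix.conjTranspose_apply, extM_succ_zero, star_zero, mul_zero, zero_add,
    extM_succ_succ, h1]
  apply Finset.sum_congr rfl
  intro k _
  have hmk : (V * N.submatrix Fin.succ Fin.succ) i k = ∑ m, V i m * N m.succ k.succ := by
    rw [Matrix.mul_apply]
    apply Finset.sum_congr rfl
    intro m _
    rw [Matrix.submatrix_apply]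
  dsimp only
  rw [hmk, Matrix.conjTranspose_apply]

end ExtM

section Perm

variable {n : ℕ}

def permEx (p : Fin (n + 1)) : Equiv.Perm (Fin (n + 1)) :=
  (finSuccEquiv n).trans (finSuccEquiv' p).symm

lemma permEx_zero (p : Fin (n + 1)) : permEx p 0 = p := by
  simp [permEx]

lemma permEx_succ (p : Fin (n + 1)) (i : Fin n) : permEx p i.succ = p.succAbove i := by
  simp [permEx]

lemma conj_submatrix {N : ℕ} (A B : Matrix (Fin N) (Fin N) ℂ) (e : Equiv.Perm (Fin N))
    (i k : Fin N) :
    ((A.submatrix ⇑e id) * B * (A.submatrix ⇑e id)ᴴ) i k = (A * B * Aᴴ) (e i) (e k) := by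
  simp only [Matrix.mul_apply, Matrix.conjTranspose_apply, Matrix.submatrix_apply, id_eq]

lemma submatrix_unitary {N : ℕ} {A : Matrix (Fin N) (Fin N) ℂ}
    (hA : A ∈ Matrix.unitaryGroup (Fin N) ℂ) (e : Equiv.Perm (Fin N)) :
    A.submatrix ⇑e id ∈ Matrix.unitaryGroup (Fin N) ℂ := by
  rw [Matrix.mem_unitaryGroup_iff]
  ext i k
  have key : (A.submatrix ⇑e id * star (A.submatrix ⇑e id)) i k = (A * star A) (e i) (e k) := by
    simp only [Matrix.mul_apply, Matrix.star_apply, Matrix.submatrix_apply, id_eq]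
  rw [key, Matrix.mem_unitaryGroup_iff.1 hA, Matrix.one_apply, Matrix.one_apply]
  simp [e.injective.eq_iff]

end Perm
lemma horn : ∀ (n : ℕ) (x y : Fin n → ℝ), Antitone x → Antitone y → PMaj x y →
    ∃ U ∈ Matrix.unitaryGroup (Fin n) ℂ,
      ∀ i, (U * Matrix.diagonal (fun m => (y m : ℂ)) * Uᴴ) i i = ((x i : ℝ) : ℂ) := by
  intro n
  induction n with
  | zero =>
    intro x y _ _ _
    exact ⟨1, one_mem _, fun i => i.elim0⟩
  | succ n ih =>
    intro x y hx hy h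
    rcases Nat.eq_zero_or_pos n with rfl | hn
    · -- size 1
      have hxy : x 0 = y 0 := by simpa using h.2
      refine ⟨1, one_mem _, fun i => ?_⟩
      have hi : i = 0 := Fin.ext (by omega)
      rw [hi, Matrix.conjTranspose_one, one_mul, mul_one, Matrix.diagonal_apply_eq, hxy]
    · -- main case
      have hy0 : x 0 ≤ y 0 := by
        have h1 := h.1 1
        rw [Psum_succ, Psum_succ, Psum_zero, Psum_zero, dif_pos (Nat.succ_pos n),
          dif_pos (Nat.succ_pos n)] at h1
        simpa using h1
      have hxl : y (Fin.last n) ≤ x (Fin.last n) := by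
        have h1 := h.1 n
        have h2 : Psum x (n + 1) = Psum x n + x (Fin.last n) := by
          rw [Psum_succ, dif_pos (Nat.lt_succ_self n)]
          rfl
        have h3 : Psum y (n + 1) = Psum y n + y (Fin.last n) := by
          rw [Psum_succ, dif_pos (Nat.lt_succ_self n)]
          rfl
        have h4 : Psum x (n + 1) = Psum y (n + 1) := by
          rw [Psum_of_le x (le_refl _), Psum_of_le y (le_refl _)]
          exact h.2
        linarith
      have hyl : y (Fin.last n) ≤ x 0 :=
        le_trans hxl (hx (Fin.zero_le _))
      obtain ⟨j, hja, haj⟩ : ∃ j : Fin n, y j.succ ≤ x 0 ∧ x 0 ≤ y j.castSucc := by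
        by_contra hcon
        push_neg at hcon
        have hall : ∀ k : Fin (n + 1), x 0 ≤ y k := by
          intro k
          induction k using Fin.induction with
          | zero => exact hy0
          | succ k ihk =>
            by_cases hs : y k.succ ≤ x 0
            · have := hcon k hs
              linarith
            · exact le_of_lt (not_le.1 hs)
        have hj0 : (⟨n - 1, by omega⟩ : Fin n).succ = Fin.last n := by
          ext
          simp
          omega
        have h1 : y (⟨n - 1, by omega⟩ : Fin n).succ ≤ x 0 := by
          rw [hj0]
          exact hyl
        have h2 := hcon ⟨n - 1, by omega⟩ h1
        have h3 := hall (⟨n - 1, by omega⟩ : Fin n).castSucc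
        linarith
      obtain ⟨c, s, hcs, hrot⟩ := exists_rot hja haj
      have hpq : j.castSucc ≠ j.succ := (Fin.castSucc_lt_succ : j.castSucc < j.succ).ne
      have hq : j.castSucc.succAbove j = j.succ :=
        Fin.succAbove_of_le_castSucc _ _ (le_refl _)
      obtain ⟨V, hVu, hV⟩ := ih (x ∘ Fin.succ) (yprime y j (x 0))
        (antitone_comp_succ hx) (antitone_yprime hy hja haj) (pmaj_step hx hy h hja haj)
      refine ⟨extM V * (rotG j.castSucc j.succ c s).submatrix ⇑(permEx j.castSucc) id,
        mul_mem (extM_unitary hVu)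
          (submatrix_unitary (rotG_unitary hpq hcs) (permEx j.castSucc)), ?_⟩
      intro i
      have hassoc : ∀ (A B D : Matrix (Fin (n + 1)) (Fin (n + 1)) ℂ),
          (A * B) * D * (A * B)ᴴ = A * (B * D * Bᴴ) * Aᴴ := by
        intro A B D
        rw [Matrix.conjTranspose_mul]
        simp only [Matrix.mul_assoc]
      rw [hassoc]
      have hN := conj_submatrix (rotG j.castSucc j.succ c s)
        (Matrix.diagonal (fun m => (y m : ℂ))) (permEx j.castSucc)
      induction i using Fin.cases with
      | zero =>
        rw [extM_conj_zero, hN 0 0, permEx_zero, rotM_pp y hpq, hrot]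
      | succ i' =>
        rw [extM_conj_succ]
        have hsub : ((rotG j.castSucc j.succ c s).submatrix (⇑(permEx j.castSucc)) id *
              Matrix.diagonal (fun m => (y m : ℂ)) *
              ((rotG j.castSucc j.succ c s).submatrix (⇑(permEx j.castSucc)) id)ᴴ).submatrix
                Fin.succ Fin.succ
            = Matrix.diagonal (fun m => ((yprime y j (x 0) m : ℝ) : ℂ)) := by
          ext i'' k''
          rw [Matrix.submatrix_apply, hN, permEx_succ, permEx_succ]
          rcases eq_or_ne i'' k'' with rfl | hik
          · rw [Matrix.diagonal_apply_eq]
            rcases eq_or_ne i'' j with hij | hij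
            · have hval : yprime y j (x 0) j = y j.castSucc + y j.succ - x 0 := by
                simp [yprime]
              rw [hij, hq, rotM_qq y hpq, hval]
              congr 1
              linear_combination (y j.castSucc + y j.succ) * hcs - hrot
            · have hip := Fin.succAbove_ne j.castSucc i''
              have hiq : j.castSucc.succAbove i'' ≠ j.succ := by
                intro hh
                exact hij (Fin.succAbove_right_injective (hh.trans hq.symm))
              have hval : yprime y j (x 0) i'' = y (j.castSucc.succAbove i'') := by
                simp [yprime, hij]
              rw [rotM_diag_other y hpq hip hiq, hval]
          · rw [Matrix.diagonal_apply_ne _ hik]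
            exact rotM_offdiag y hpq (Fin.succAbove_ne _ i'') (Fin.succAbove_ne _ k'')
              (fun hh => hik (Fin.succAbove_right_injective hh))
        rw [hsub, hV i']
        rfl

end SchurHornAux

section

open SchurHornAux

/-- Schur–Horn for the unitary orbit of a density matrix: the achievable diagonals of
`UρU†` are exactly the vectors majorized by the sorted eigenvalue vector `λ↓(ρ)`. -/
theorem diag_unitary_orbit_eq_majorized {n : ℕ} (ρ : Matrix (Fin n) (Fin n) ℂ)
    (hρ : ρ.PosSemidef) (htr : ρ.trace = 1) :
    {d : Fin n → ℝ | ∃ U ∈ Matrix.unitaryGroup (Fin n) ℂ,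
        d = fun i => ((U * ρ * Uᴴ) i i).re} =
      {u : Fin n → ℝ | Maj u (sortDesc hρ.1.eigenvalues)} := by
  have hherm := hρ.1
  have hVmem : (hherm.eigenvectorUnitary : Matrix (Fin n) (Fin n) ℂ)
      ∈ Matrix.unitaryGroup (Fin n) ℂ := (hherm.eigenvectorUnitary).2
  set V : Matrix (Fin n) (Fin n) ℂ := (hherm.eigenvectorUnitary : Matrix (Fin n) (Fin n) ℂ)
    with hVdef
  have hspec : ρ = V * Matrix.diagonal (fun m => ((hherm.eigenvalues m : ℝ) : ℂ)) * Vᴴ := by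
    rw [← Matrix.star_eq_conjTranspose]
    exact hherm.spectral_theorem
  ext d
  simp only [Set.mem_setOf_eq]
  constructor
  · rintro ⟨U, hU, rfl⟩
    have hWmem : U * V ∈ Matrix.unitaryGroup (Fin n) ℂ := mul_mem hU hVmem
    have hconj : U * ρ * Uᴴ
        = (U * V) * Matrix.diagonal (fun m => ((hherm.eigenvalues m : ℝ) : ℂ)) * (U * V)ᴴ := by
      conv_lhs => rw [hspec]
      simp only [Matrix.conjTranspose_mul, Matrix.mul_assoc]
    have hd : (fun i => ((U * ρ * Uᴴ) i i).re)
        = fun i => ∑ m, Complex.normSq ((U * V) i m) * hherm.eigenvalues m := by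
      funext i
      rw [hconj, diag_conj_eq_weighted]
      exact Complex.ofReal_re _
    rw [hd]
    have hmaj := maj_of_unitary hWmem hherm.eigenvalues
    have h2 := Maj_comp_perm (Equiv.refl (Fin n))
      (Fin.revPerm.trans (Tuple.sort hherm.eigenvalues)) hmaj
    rwa [show (fun i => ∑ m, Complex.normSq ((U * V) i m) * hherm.eigenvalues m)
          ∘ ⇑(Equiv.refl (Fin n))
        = fun i => ∑ m, Complex.normSq ((U * V) i m) * hherm.eigenvalues m from rfl,
      show hherm.eigenvalues ∘ ⇑(Fin.revPerm.trans (Tuple.sort hherm.eigenvalues))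
        = sortDesc hherm.eigenvalues from (sortDesc_eq_comp hherm.eigenvalues).symm] at h2
  · intro hu
    have hxmaj : Maj (sortDesc d) (sortDesc hherm.eigenvalues) := by
      have h2 := Maj_comp_perm (Fin.revPerm.trans (Tuple.sort d)) (Equiv.refl (Fin n)) hu
      rwa [show d ∘ ⇑(Fin.revPerm.trans (Tuple.sort d)) = sortDesc d from
          (sortDesc_eq_comp d).symm,
        show sortDesc hherm.eigenvalues ∘ ⇑(Equiv.refl (Fin n))
          = sortDesc hherm.eigenvalues from rfl] at h2
    have hpm := maj_to_pmaj (antitone_sortDesc hherm.eigenvalues) hxmaj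
    obtain ⟨U₀, hU₀, hdiag⟩ := horn n (sortDesc d) (sortDesc hherm.eigenvalues)
      (antitone_sortDesc d) (antitone_sortDesc hherm.eigenvalues) hpm
    have hP1mem : (1 : Matrix (Fin n) (Fin n) ℂ).submatrix
          ⇑(Fin.revPerm.trans (Tuple.sort hherm.eigenvalues)) id
        ∈ Matrix.unitaryGroup (Fin n) ℂ :=
      submatrix_unitary (one_mem _) _
    have hP2mem : (1 : Matrix (Fin n) (Fin n) ℂ).submatrix
          ⇑((Fin.revPerm.trans (Tuple.sort d)).symm) id
        ∈ Matrix.unitaryGroup (Fin n) ℂ :=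
      submatrix_unitary (one_mem _) _
    have hVHmem : Vᴴ ∈ Matrix.unitaryGroup (Fin n) ℂ :=
      Matrix.star_eq_conjTranspose V ▸ Unitary.star_mem hVmem
    refine ⟨(1 : Matrix (Fin n) (Fin n) ℂ).submatrix
          ⇑((Fin.revPerm.trans (Tuple.sort d)).symm) id * U₀ *
        (1 : Matrix (Fin n) (Fin n) ℂ).submatrix
          ⇑(Fin.revPerm.trans (Tuple.sort hherm.eigenvalues)) id * Vᴴ,
      mul_mem (mul_mem (mul_mem hP2mem hU₀) hP1mem) hVHmem, ?_⟩
    funext i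
    have hstep1 : Vᴴ * ρ * V = Matrix.diagonal (fun m => ((hherm.eigenvalues m : ℝ) : ℂ)) := by
      have h1 : Vᴴ * V = 1 := by
        rw [← Matrix.star_eq_conjTranspose]
        exact Matrix.mem_unitaryGroup_iff'.1 hVmem
      conv_lhs => rw [hspec]
      rw [show Vᴴ * (V * Matrix.diagonal (fun m => ((hherm.eigenvalues m : ℝ) : ℂ)) * Vᴴ) * V
          = (Vᴴ * V) * Matrix.diagonal (fun m => ((hherm.eigenvalues m : ℝ) : ℂ)) * (Vᴴ * V) from by
        simp only [Matrix.mul_assoc]]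
      rw [h1, one_mul, mul_one]
    have hstep2 : (1 : Matrix (Fin n) (Fin n) ℂ).submatrix
            ⇑(Fin.revPerm.trans (Tuple.sort hherm.eigenvalues)) id *
          Matrix.diagonal (fun m => ((hherm.eigenvalues m : ℝ) : ℂ)) *
          ((1 : Matrix (Fin n) (Fin n) ℂ).submatrix
            ⇑(Fin.revPerm.trans (Tuple.sort hherm.eigenvalues)) id)ᴴ
        = Matrix.diagonal (fun m => ((sortDesc hherm.eigenvalues m : ℝ) : ℂ)) := by
      ext i' k'
      rw [conj_submatrix (1 : Matrix (Fin n) (Fin n) ℂ) _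
        (Fin.revPerm.trans (Tuple.sort hherm.eigenvalues)) i' k',
        Matrix.conjTranspose_one, mul_one, one_mul]
      rcases eq_or_ne i' k' with rfl | hik
      · rw [Matrix.diagonal_apply_eq, Matrix.diagonal_apply_eq]
        rfl
      · rw [Matrix.diagonal_apply_ne _
          ((Fin.revPerm.trans (Tuple.sort hherm.eigenvalues)).injective.ne hik),
          Matrix.diagonal_apply_ne _ hik]
    have hfull : ((1 : Matrix (Fin n) (Fin n) ℂ).submatrix
            ⇑((Fin.revPerm.trans (Tuple.sort d)).symm) id * U₀ *
          (1 : Matrix (Fin n) (Fin n) ℂ).submatrix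
            ⇑(Fin.revPerm.trans (Tuple.sort hherm.eigenvalues)) id * Vᴴ) * ρ *
          ((1 : Matrix (Fin n) (Fin n) ℂ).submatrix
            ⇑((Fin.revPerm.trans (Tuple.sort d)).symm) id * U₀ *
          (1 : Matrix (Fin n) (Fin n) ℂ).submatrix
            ⇑(Fin.revPerm.trans (Tuple.sort hherm.eigenvalues)) id * Vᴴ)ᴴ
        = (1 : Matrix (Fin n) (Fin n) ℂ).submatrix
            ⇑((Fin.revPerm.trans (Tuple.sort d)).symm) id *
          (U₀ * ((1 : Matrix (Fin n) (Fin n) ℂ).submatrix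
            ⇑(Fin.revPerm.trans (Tuple.sort hherm.eigenvalues)) id *
              (Vᴴ * ρ * V) *
            ((1 : Matrix (Fin n) (Fin n) ℂ).submatrix
              ⇑(Fin.revPerm.trans (Tuple.sort hherm.eigenvalues)) id)ᴴ) * U₀ᴴ) *
          ((1 : Matrix (Fin n) (Fin n) ℂ).submatrix
            ⇑((Fin.revPerm.trans (Tuple.sort d)).symm) id)ᴴ := by
      simp only [Matrix.conjTranspose_mul, Matrix.conjTranspose_conjTranspose, Matrix.mul_assoc]
    rw [hfull, hstep1, hstep2]
    have hlast := conj_submatrix (1 : Matrix (Fin n) (Fin n) ℂ)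
      (U₀ * Matrix.diagonal (fun m => ((sortDesc hherm.eigenvalues m : ℝ) : ℂ)) * U₀ᴴ)
      ((Fin.revPerm.trans (Tuple.sort d)).symm) i i
    rw [Matrix.conjTranspose_one, mul_one, one_mul] at hlast
    rw [hlast, hdiag ((Fin.revPerm.trans (Tuple.sort d)).symm i)]
    have hfin : sortDesc d ((Fin.revPerm.trans (Tuple.sort d)).symm i) = d i := by
      show d ((Fin.revPerm.trans (Tuple.sort d)) ((Fin.revPerm.trans (Tuple.sort d)).symm i)) = d i
      rw [Equiv.apply_symm_apply]
    rw [hfin, Complex.ofReal_re]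

end
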